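/- (Lemma 1, w-derivatives, case 0<a≤1.) Let 0<a≤1, σ>-1, and let c_0,…,c_{n+1} be arbitrary complex constants. Define K(ξ,ξ') = Σ_{k=0}^{n+1} c_k (1-⟨z,z'⟩)^{ak-n-1} / ((1-⟨z,z'⟩)^a - ⟨w,w'⟩)^{σ+m+k} for ξ=(z,w), ξ'=(z',w') ∈ Ω_a. Then there is a constant C (depending on a, n, m, σ and the c_k) such that for all ξ, ξ' ∈ Ω_a and all 1≤j≤m, |∂K/∂w_j(ξ,ξ')| ≤ C |G_σ(ξ,ξ')|², where the derivative is taken in the first variable. -/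

import Mathlib

noncomputable section

/-- The egg domain `Ω_a = {(z,w) ∈ ℂ^n × ℂ^m : |z|² + |w|^{2/a} < 1}`. -/
def eggP (a : ℝ) (n m : ℕ) : Set ((Fin n → ℂ) × (Fin m → ℂ)) :=
  {ζ | (∑ j, ‖ζ.1 j‖ ^ 2) + (∑ j, ‖ζ.2 j‖ ^ 2) ^ (1 / a) < 1}

/-- The Hermitian inner product `⟨z,z'⟩ = Σ_j z_j conj(z'_j)`. -/
def herm {n : ℕ} (z z' : Fin n → ℂ) : ℂ :=
  ∑ j, z j * (starRingEnd ℂ) (z' j)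

/-- The kernel
`K(ξ,ξ') = Σ_{k=0}^{n+1} c_k (1-⟨z,z'⟩)^{ak-n-1} / ((1-⟨z,z'⟩)^a - ⟨w,w'⟩)^{σ+m+k}`
(principal-branch complex powers). -/
def Kker (a σ : ℝ) (n m : ℕ) (c : Fin (n + 2) → ℂ)
    (ξ ξ' : (Fin n → ℂ) × (Fin m → ℂ)) : ℂ :=
  ∑ k : Fin (n + 2),
    c k * (1 - herm ξ.1 ξ'.1) ^ ((a * k - n - 1 : ℝ) : ℂ) /
      ((1 - herm ξ.1 ξ'.1) ^ (a : ℂ) - herm ξ.2 ξ'.2) ^ ((σ + m + k : ℝ) : ℂ)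

/-- The kernel `G_σ(ξ,ξ') = (1-⟨z,z'⟩)^{(a-1)(n+2)/2} / ((1-⟨z,z'⟩)^a - ⟨w,w'⟩)^{(σ+m+n+2)/2}`
(case `0 < a ≤ 1`, principal-branch complex powers). -/
def Gker (a σ : ℝ) (n m : ℕ) (ξ ξ' : (Fin n → ℂ) × (Fin m → ℂ)) : ℂ :=
  (1 - herm ξ.1 ξ'.1) ^ (((a - 1) * (n + 2) / 2 : ℝ) : ℂ) /
    ((1 - herm ξ.1 ξ'.1) ^ (a : ℂ) - herm ξ.2 ξ'.2) ^ (((σ + m + n + 2) / 2 : ℝ) : ℂ)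

/-! ### Auxiliary lemmas -/

lemma norm_cpow_real {x : ℂ} (hx : x ≠ 0) (r : ℝ) : ‖x ^ (r : ℂ)‖ = ‖x‖ ^ r := by
  rw [Complex.norm_cpow_of_ne_zero hx]
  simp

lemma cpow_ne_zero' {B : ℂ} (hB0 : B ≠ 0) (s : ℂ) : B ^ s ≠ 0 := by
  simp [Complex.cpow_eq_zero_iff, hB0]

lemma herm_norm_le {n : ℕ} (z z' : Fin n → ℂ) :
    ‖herm z z'‖ ≤ Real.sqrt (∑ j, ‖z j‖ ^ 2) * Real.sqrt (∑ j, ‖z' j‖ ^ 2) := by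
  have h1 : ‖herm z z'‖ ≤ ∑ j, ‖z j‖ * ‖z' j‖ := by
    refine (norm_sum_le _ _).trans (Finset.sum_le_sum fun i _ => ?_)
    rw [norm_mul]
    simp
  refine h1.trans ?_
  have h2 := Finset.sum_mul_sq_le_sq_mul_sq Finset.univ (fun j => ‖z j‖) (fun j => ‖z' j‖)
  have h3 : (0:ℝ) ≤ ∑ j, ‖z j‖ * ‖z' j‖ :=
    Finset.sum_nonneg fun i _ => mul_nonneg (norm_nonneg _) (norm_nonneg _)
  rw [← Real.sqrt_mul (Finset.sum_nonneg fun i _ => sq_nonneg _)]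
  exact (Real.le_sqrt h3 (by positivity)).mpr h2

lemma herm_add_left {n : ℕ} (x y w : Fin n → ℂ) :
    herm (x + y) w = herm x w + herm y w := by
  simp [herm, add_mul, Finset.sum_add_distrib]

lemma herm_smul_left {n : ℕ} (t : ℂ) (x w : Fin n → ℂ) :
    herm (t • x) w = t * herm x w := by
  simp [herm, Finset.mul_sum, mul_assoc]

lemma herm_single {m : ℕ} (j : Fin m) (w : Fin m → ℂ) :
    herm (Pi.single j 1) w = (starRingEnd ℂ) (w j) := by
  simp [herm, Pi.single_apply, ite_mul]

lemma egg_facts {a : ℝ} (ha : 0 < a) {n m : ℕ} {ξ : (Fin n → ℂ) × (Fin m → ℂ)}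
    (h : ξ ∈ eggP a n m) :
    (∑ j, ‖ξ.1 j‖ ^ 2) < 1 ∧ (∑ j, ‖ξ.2 j‖ ^ 2) < (1 - ∑ j, ‖ξ.1 j‖ ^ 2) ^ a := by
  have hSw : (0:ℝ) ≤ ∑ j, ‖ξ.2 j‖ ^ 2 := by positivity
  have h' : (∑ j, ‖ξ.1 j‖ ^ 2) + (∑ j, ‖ξ.2 j‖ ^ 2) ^ (1/a) < 1 := h
  have h0 : (0:ℝ) ≤ (∑ j, ‖ξ.2 j‖ ^ 2) ^ (1/a) := Real.rpow_nonneg hSw _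
  refine ⟨by linarith, ?_⟩
  have h2 : (∑ j, ‖ξ.2 j‖ ^ 2) ^ (1/a) < 1 - ∑ j, ‖ξ.1 j‖ ^ 2 := by linarith
  have h3 := Real.rpow_lt_rpow h0 h2 ha
  rwa [← Real.rpow_mul hSw, one_div, inv_mul_cancel₀ ha.ne', Real.rpow_one] at h3

lemma key_est {a Sz Sz' Sw Sw' gn : ℝ} (ha : 0 < a)
    (hSz : 0 ≤ Sz) (hSz' : 0 ≤ Sz') (hSw : 0 ≤ Sw) (hSw' : 0 ≤ Sw')
    (h1 : Sz < 1) (h2 : Sz' < 1) (h3 : Sw < (1-Sz)^a) (h4 : Sw' < (1-Sz')^a)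
    (hg : gn ≤ Real.sqrt Sw * Real.sqrt Sw') :
    gn < (1 - Real.sqrt Sz * Real.sqrt Sz') ^ a := by
  have hz1 : Real.sqrt Sz * Real.sqrt Sz' ≤ 1 := by
    have := Real.sqrt_le_one.mpr (le_of_lt h1)
    have := Real.sqrt_le_one.mpr (le_of_lt h2)
    have := Real.sqrt_nonneg Sz
    have := Real.sqrt_nonneg Sz'
    nlinarith
  have hX : (0:ℝ) ≤ (1-Sz)*(1-Sz') := by nlinarith
  have hAM : Real.sqrt ((1-Sz)*(1-Sz')) ≤ 1 - Real.sqrt Sz * Real.sqrt Sz' := by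
    have hx := Real.sq_sqrt hSz
    have hy := Real.sq_sqrt hSz'
    have h5 : (1-Sz)*(1-Sz') ≤ (1 - Real.sqrt Sz * Real.sqrt Sz')^2 := by
      nlinarith [sq_nonneg (Real.sqrt Sz - Real.sqrt Sz'), Real.sqrt_nonneg Sz,
        Real.sqrt_nonneg Sz']
    calc Real.sqrt ((1-Sz)*(1-Sz')) ≤ Real.sqrt ((1 - Real.sqrt Sz * Real.sqrt Sz')^2) :=
          Real.sqrt_le_sqrt h5
      _ = 1 - Real.sqrt Sz * Real.sqrt Sz' := Real.sqrt_sq (by linarith)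
  have hmul : Sw * Sw' < (1-Sz)^a * (1-Sz')^a := by
    exact mul_lt_mul'' h3 h4 hSw hSw'
  calc gn ≤ Real.sqrt Sw * Real.sqrt Sw' := hg
    _ = Real.sqrt (Sw * Sw') := (Real.sqrt_mul hSw _).symm
    _ < Real.sqrt ((1-Sz)^a * (1-Sz')^a) := by
        exact (Real.sqrt_lt_sqrt (by positivity) hmul)
    _ = Real.sqrt (((1-Sz)*(1-Sz'))^a) := by
        rw [← Real.mul_rpow (by linarith) (by linarith)]
    _ = (Real.sqrt ((1-Sz)*(1-Sz')))^a := by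
        rw [Real.sqrt_eq_rpow, Real.sqrt_eq_rpow, ← Real.rpow_mul hX,
          ← Real.rpow_mul hX, mul_one_div, one_div_mul_eq_div, mul_comm]
    _ ≤ (1 - Real.sqrt Sz * Real.sqrt Sz')^a := Real.rpow_le_rpow (Real.sqrt_nonneg _) hAM ha.le

lemma core_ineq {a r b : ℝ} (ha : 0 < a) (ha1 : a ≤ 1) (hr : 0 < r) (hr2 : r ≤ 2)
    (hb : 0 < b) (hb2 : b ≤ 2 * r ^ a) (n k : ℕ) (hk : k ≤ n + 1) (s : ℝ) :
    r ^ (a*(k:ℝ) - (n:ℝ) - 1) * b ^ (-(s + (k:ℝ) + 1)) ≤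
      (2:ℝ)^((n:ℝ)+2) * (r ^ ((a-1)*((n:ℝ)+2)) / b ^ (s + (n:ℝ) + 2)) := by
  have hk' : (k:ℝ) ≤ (n:ℝ)+1 := by exact_mod_cast hk
  have he : (0:ℝ) ≤ (n:ℝ)+1-(k:ℝ) := by linarith
  have e1 : b ^ (-(s + (k:ℝ) + 1)) = b ^ ((n:ℝ)+1-(k:ℝ)) * b ^ (-(s+(n:ℝ)+2)) := by
    rw [← Real.rpow_add hb]; congr 1; ring
  have e2 : b ^ ((n:ℝ)+1-(k:ℝ)) ≤ 2^((n:ℝ)+1) * r ^ (a*((n:ℝ)+1-(k:ℝ))) := by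
    calc b ^ ((n:ℝ)+1-(k:ℝ)) ≤ (2 * r^a) ^ ((n:ℝ)+1-(k:ℝ)) :=
          Real.rpow_le_rpow hb.le hb2 he
      _ = 2 ^ ((n:ℝ)+1-(k:ℝ)) * (r^a) ^ ((n:ℝ)+1-(k:ℝ)) :=
          Real.mul_rpow (by norm_num) (Real.rpow_nonneg hr.le a)
      _ = 2 ^ ((n:ℝ)+1-(k:ℝ)) * r ^ (a*((n:ℝ)+1-(k:ℝ))) := by
          rw [← Real.rpow_mul hr.le]
      _ ≤ 2^((n:ℝ)+1) * r ^ (a*((n:ℝ)+1-(k:ℝ))) := by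
          gcongr
          · norm_num
          · linarith
  have e3 : r ^ (a*(k:ℝ) - (n:ℝ) - 1) * r ^ (a*((n:ℝ)+1-(k:ℝ)))
      = r ^ (1-a) * r ^ ((a-1)*((n:ℝ)+2)) := by
    rw [← Real.rpow_add hr, ← Real.rpow_add hr]; congr 1; ring
  have e4 : r ^ (1-a) ≤ 2 := by
    calc r ^ (1-a) ≤ 2 ^ (1-a) := Real.rpow_le_rpow hr.le hr2 (by linarith)
      _ ≤ 2 ^ (1:ℝ) := Real.rpow_le_rpow_of_exponent_le one_le_two (by linarith)
      _ = 2 := Real.rpow_one 2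
  have e5 : (2:ℝ)^((n:ℝ)+2) = 2^((n:ℝ)+1) * 2 := by
    rw [← Real.rpow_add_one (by norm_num : (2:ℝ) ≠ 0)]; congr 1; ring
  have hb' : (0:ℝ) ≤ b ^ (-(s+(n:ℝ)+2)) := Real.rpow_nonneg hb.le _
  have hrpos : ∀ x : ℝ, (0:ℝ) ≤ r ^ x := fun x => Real.rpow_nonneg hr.le x
  have h2pos : (0:ℝ) ≤ 2^((n:ℝ)+1) := Real.rpow_nonneg (by norm_num) _
  calc r ^ (a*(k:ℝ) - (n:ℝ) - 1) * b ^ (-(s + (k:ℝ) + 1))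
      = (r ^ (a*(k:ℝ) - (n:ℝ) - 1) * b ^ ((n:ℝ)+1-(k:ℝ))) * b ^ (-(s+(n:ℝ)+2)) := by
        rw [e1]; ring
    _ ≤ (r ^ (a*(k:ℝ) - (n:ℝ) - 1) * (2^((n:ℝ)+1) * r ^ (a*((n:ℝ)+1-(k:ℝ))))) *
          b ^ (-(s+(n:ℝ)+2)) := by
        gcongr
    _ = 2^((n:ℝ)+1) * (r ^ (1-a) * r ^ ((a-1)*((n:ℝ)+2))) * b ^ (-(s+(n:ℝ)+2)) := by
        rw [← e3]; ring
    _ ≤ 2^((n:ℝ)+1) * (2 * r ^ ((a-1)*((n:ℝ)+2))) * b ^ (-(s+(n:ℝ)+2)) := by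
        gcongr
    _ = (2:ℝ)^((n:ℝ)+2) * (r ^ ((a-1)*((n:ℝ)+2)) / b ^ (s + (n:ℝ) + 2)) := by
        rw [e5, Real.rpow_neg hb.le, div_eq_mul_inv]; ring

lemma hasDerivAt_term {A B q s e cc : ℂ} (hB0 : B ≠ 0) (hBslit : B ∈ Complex.slitPlane) :
    HasDerivAt (fun t : ℂ => cc * A ^ e / (B - t * q) ^ s)
      (cc * A ^ e * s * q * B ^ (-(s+1))) 0 := by
  have hd1 : HasDerivAt (fun t : ℂ => B - t * q) (-q) 0 := by
    simpa using ((hasDerivAt_id (0:ℂ)).mul_const q).const_sub B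
  have h0 : B - (0:ℂ) * q = B := by simp
  have hd2 : HasDerivAt (fun t : ℂ => (B - t * q) ^ s) (s * B ^ (s-1) * -q) 0 := by
    have := hd1.cpow_const (c := s) (by rwa [h0])
    rwa [h0] at this
  have hd3 := (hasDerivAt_const (0:ℂ) (cc * A ^ e)).div hd2
    (by rw [h0]; exact cpow_ne_zero' hB0 s)
  rw [h0] at hd3
  convert hd3 using 1
  · rfl
  · rfl
  · rfl
  have hsq : (B ^ s) ^ 2 = B ^ (s + s) := by rw [sq, ← Complex.cpow_add _ _ hB0]
  rw [hsq]
  rw [show (0 : ℂ) * B ^ s - cc * A ^ e * (s * B ^ (s-1) * -q)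
      = cc * A ^ e * s * q * B ^ (s-1) by ring]
  rw [mul_div_assoc, ← Complex.cpow_sub _ _ hB0]
  congr 1
  ring

set_option maxHeartbeats 1000000 in
set_option synthInstance.maxHeartbeats 400000 in
/-- Lemma 1 (w-derivatives, case `0 < a ≤ 1`):
`|∂K/∂w_j(ξ,ξ')| ≤ C |G_σ(ξ,ξ')|²` for `ξ, ξ' ∈ Ω_a`, `1 ≤ j ≤ m`. -/
theorem kernel_wderiv_bound (n m : ℕ) (hn : 1 ≤ n) (hm : 1 ≤ m)
    (a σ : ℝ) (ha : 0 < a) (ha1 : a ≤ 1) (hσ : -1 < σ) (c : Fin (n + 2) → ℂ) :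
    ∃ C : ℝ, ∀ ξ ∈ eggP a n m, ∀ ξ' ∈ eggP a n m, ∀ j : Fin m,
      ‖fderiv ℂ (fun ζ : (Fin n → ℂ) × (Fin m → ℂ) => Kker a σ n m c ζ ξ') ξ
          (0, Pi.single j 1)‖ ≤ C * ‖Gker a σ n m ξ ξ'‖ ^ 2 := by
  classical
  refine ⟨(2:ℝ)^((n:ℝ)+2) * ∑ k : Fin (n+2), ‖c k‖ * (σ + m + (k:ℕ) + 1), ?_⟩
  intro ξ hξ ξ' hξ' j
  obtain ⟨hSz, hSw⟩ := egg_facts ha hξ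
  obtain ⟨hSz', hSw'⟩ := egg_facts ha hξ'
  have hSznn : (0:ℝ) ≤ ∑ i, ‖ξ.1 i‖ ^ 2 := by positivity
  have hSz'nn : (0:ℝ) ≤ ∑ i, ‖ξ'.1 i‖ ^ 2 := by positivity
  have hSwnn : (0:ℝ) ≤ ∑ i, ‖ξ.2 i‖ ^ 2 := by positivity
  have hSw'nn : (0:ℝ) ≤ ∑ i, ‖ξ'.2 i‖ ^ 2 := by positivity
  set u : ℂ := herm ξ.1 ξ'.1 with hu_def
  set A : ℂ := 1 - u with hA_def
  set g : ℂ := herm ξ.2 ξ'.2 with hg_def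
  set B : ℂ := A ^ (a:ℂ) - g with hB_def
  set q : ℂ := (starRingEnd ℂ) (ξ'.2 j) with hq_def
  set t0 : ℝ := Real.sqrt (∑ i, ‖ξ.1 i‖ ^ 2) * Real.sqrt (∑ i, ‖ξ'.1 i‖ ^ 2) with ht0_def
  have ht0nn : 0 ≤ t0 := mul_nonneg (Real.sqrt_nonneg _) (Real.sqrt_nonneg _)
  have ht0 : t0 < 1 := by
    have h1 : Real.sqrt (∑ i, ‖ξ.1 i‖ ^ 2) < 1 := by
      have := Real.sqrt_lt_sqrt hSznn hSz
      rwa [Real.sqrt_one] at this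
    have h2 := Real.sqrt_le_one.mpr (le_of_lt hSz')
    nlinarith [Real.sqrt_nonneg (∑ i, ‖ξ.1 i‖ ^ 2), Real.sqrt_nonneg (∑ i, ‖ξ'.1 i‖ ^ 2)]
  have hu : ‖u‖ ≤ t0 := herm_norm_le _ _
  have hARe : 0 < A.re := by
    have h1 : u.re ≤ ‖u‖ := Complex.re_le_norm u
    have h2 : A.re = 1 - u.re := by rw [hA_def]; simp
    rw [h2]; linarith
  have hA0 : A ≠ 0 := by
    intro h
    rw [h] at hARe
    simp at hARe
  have hAslit : A ∈ Complex.slitPlane := Complex.mem_slitPlane_iff.mpr (Or.inl hARe)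
  have hApos : 0 < ‖A‖ := norm_pos_iff.mpr hA0
  have hAlb : 1 - t0 ≤ ‖A‖ := by
    have h1 : u.re ≤ ‖u‖ := Complex.re_le_norm u
    have h2 : A.re ≤ ‖A‖ := Complex.re_le_norm A
    have h3 : A.re = 1 - u.re := by rw [hA_def]; simp
    linarith
  have hAub : ‖A‖ ≤ 2 := by
    have := norm_sub_le (1:ℂ) u
    rw [← hA_def] at this
    simp only [norm_one] at this
    linarith
  have hgA : ‖g‖ < ‖A‖ ^ a := by
    have h1 : ‖g‖ < (1 - t0) ^ a :=
      key_est ha hSznn hSz'nn hSwnn hSw'nn hSz hSz' hSw hSw' (herm_norm_le _ _)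
    exact h1.trans_le (Real.rpow_le_rpow (by linarith) hAlb ha.le)
  have hnormAa : ‖A ^ (a:ℂ)‖ = ‖A‖ ^ a := norm_cpow_real hA0 a
  have hB0 : B ≠ 0 := by
    rw [hB_def]
    intro h
    have h2 : A ^ (a:ℂ) = g := by
      have := sub_eq_zero.mp h
      exact this
    rw [← h2, hnormAa] at hgA
    exact lt_irrefl _ hgA
  have hBpos : 0 < ‖B‖ := norm_pos_iff.mpr hB0
  have hBub : ‖B‖ ≤ 2 * ‖A‖ ^ a := by
    have := norm_sub_le (A ^ (a:ℂ)) g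
    rw [← hB_def, hnormAa] at this
    linarith
  have hAaRe : 0 < (A ^ (a:ℂ)).re := by
    rw [Complex.cpow_def_of_ne_zero hA0, Complex.exp_re]
    have harg : |Complex.arg A| < Real.pi / 2 :=
      Complex.abs_arg_lt_pi_div_two_iff.mpr (Or.inl hARe)
    have him : (Complex.log A * (a:ℂ)).im = a * Complex.arg A := by
      simp [Complex.mul_im, Complex.log_im]; ring
    rw [him]
    have hpi := Real.pi_pos
    obtain ⟨hl, hr⟩ := abs_lt.mp harg
    have hcos : 0 < Real.cos (a * Complex.arg A) := by
      apply Real.cos_pos_of_mem_Ioo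
      constructor <;> nlinarith
    exact mul_pos (Real.exp_pos _) hcos
  have hBslit : B ∈ Complex.slitPlane := by
    rw [Complex.mem_slitPlane_iff]
    by_contra hc
    push_neg at hc
    obtain ⟨h1, h2⟩ := hc
    have hgeq : g = A ^ (a:ℂ) - B := by rw [hB_def]; ring
    have hgre : g.re = (A ^ (a:ℂ)).re - B.re := by rw [hgeq]; simp
    have hgim : g.im = (A ^ (a:ℂ)).im := by rw [hgeq]; simp [h2]
    have e1 : ‖g‖^2 = g.re^2 + g.im^2 := by
      rw [Complex.sq_norm, Complex.normSq_apply]; ring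
    have e2 : ‖A ^ (a:ℂ)‖^2 = (A ^ (a:ℂ)).re^2 + (A ^ (a:ℂ)).im^2 := by
      rw [Complex.sq_norm, Complex.normSq_apply]; ring
    have h3 : ‖g‖ < ‖A ^ (a:ℂ)‖ := by rw [hnormAa]; exact hgA
    have h4 : ‖g‖^2 < ‖A ^ (a:ℂ)‖^2 := by
      nlinarith [norm_nonneg g, norm_nonneg (A ^ (a:ℂ))]
    rw [hgre, hgim] at e1
    nlinarith [mul_nonneg hAaRe.le (neg_nonneg.mpr h1), sq_nonneg B.re]
  -- differentiability
  have hd1 : DifferentiableAt ℂ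
      (fun ζ : (Fin n → ℂ) × (Fin m → ℂ) => herm ζ.1 ξ'.1) ξ := by
    apply DifferentiableAt.fun_sum
    intro i _
    have hp : Differentiable ℂ (fun ζ : (Fin n → ℂ) × (Fin m → ℂ) => ζ.1 i) :=
      ((ContinuousLinearMap.proj i : (Fin n → ℂ) →L[ℂ] ℂ).differentiable).comp
        differentiable_fst
    exact (hp ξ).mul_const _
  have hd2 : DifferentiableAt ℂ
      (fun ζ : (Fin n → ℂ) × (Fin m → ℂ) => herm ζ.2 ξ'.2) ξ := by
    apply DifferentiableAt.fun_sum
    intro i _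
    have hp : Differentiable ℂ (fun ζ : (Fin n → ℂ) × (Fin m → ℂ) => ζ.2 i) :=
      ((ContinuousLinearMap.proj i : (Fin m → ℂ) →L[ℂ] ℂ).differentiable).comp
        differentiable_snd
    exact (hp ξ).mul_const _
  have hdA : DifferentiableAt ℂ
      (fun ζ : (Fin n → ℂ) × (Fin m → ℂ) => (1:ℂ) - herm ζ.1 ξ'.1) ξ :=
    (differentiableAt_const _).sub hd1
  have hdB : DifferentiableAt ℂ
      (fun ζ : (Fin n → ℂ) × (Fin m → ℂ) =>
        ((1:ℂ) - herm ζ.1 ξ'.1) ^ (a:ℂ) - herm ζ.2 ξ'.2) ξ :=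
    (hdA.cpow (differentiableAt_const _) hAslit).sub hd2
  have hF : DifferentiableAt ℂ
      (fun ζ : (Fin n → ℂ) × (Fin m → ℂ) => Kker a σ n m c ζ ξ') ξ := by
    simp only [Kker]
    apply DifferentiableAt.fun_sum
    intro k _
    have hnum : DifferentiableAt ℂ (fun ζ : (Fin n → ℂ) × (Fin m → ℂ) =>
        c k * ((1:ℂ) - herm ζ.1 ξ'.1) ^ ((a * k - n - 1 : ℝ) : ℂ)) ξ :=
      (differentiableAt_const _).mul (hdA.cpow (differentiableAt_const _) hAslit)
    have hden : DifferentiableAt ℂ (fun ζ : (Fin n → ℂ) × (Fin m → ℂ) =>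
        (((1:ℂ) - herm ζ.1 ξ'.1) ^ (a:ℂ) - herm ζ.2 ξ'.2) ^ ((σ + m + k : ℝ) : ℂ)) ξ :=
      hdB.cpow (differentiableAt_const _) hBslit
    have hne : (fun ζ : (Fin n → ℂ) × (Fin m → ℂ) =>
        (((1:ℂ) - herm ζ.1 ξ'.1) ^ (a:ℂ) - herm ζ.2 ξ'.2) ^ ((σ + m + k : ℝ) : ℂ)) ξ ≠ 0 :=
      cpow_ne_zero' hB0 _
    exact hnum.mul (hden.inv hne)
  -- the derivative along the line
  set v : (Fin n → ℂ) × (Fin m → ℂ) := (0, Pi.single j 1) with hv_def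
  have hline : HasDerivAt (fun t : ℂ => ξ + t • v) v 0 := by
    simpa using ((hasDerivAt_id (0:ℂ)).smul_const v).const_add ξ
  have hξ0 : ξ + (0:ℂ) • v = ξ := by simp
  have hcomp : HasDerivAt (fun t : ℂ => Kker a σ n m c (ξ + t • v) ξ')
      (fderiv ℂ (fun ζ : (Fin n → ℂ) × (Fin m → ℂ) => Kker a σ n m c ζ ξ') ξ v) 0 := by
    have hF' := hF.hasFDerivAt
    rw [← hξ0] at hF'
    have h := hF'.comp_hasDerivAt 0 hline
    rw [hξ0] at h
    exact h
  have hfun : (fun t : ℂ => Kker a σ n m c (ξ + t • v) ξ') =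
      fun t : ℂ => ∑ k : Fin (n+2),
        c k * A ^ ((a * k - n - 1 : ℝ) : ℂ) / (B - t * q) ^ ((σ + m + k : ℝ) : ℂ) := by
    funext t
    have h1 : (ξ + t • v).1 = ξ.1 := by
      rw [hv_def]
      show ξ.1 + t • (0 : Fin n → ℂ) = ξ.1
      rw [smul_zero, add_zero]
    have h2 : herm (ξ + t • v).2 ξ'.2 = g + t * q := by
      have h3 : (ξ + t • v).2 = ξ.2 + t • (Pi.single j 1 : Fin m → ℂ) := rfl
      rw [h3, herm_add_left, herm_smul_left, herm_single, hg_def, hq_def]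
    simp only [Kker, h1, h2]
    refine Finset.sum_congr rfl fun k _ => ?_
    rw [← hu_def, ← hA_def]
    congr 2
    rw [hB_def]
    ring
  have hexp : HasDerivAt (fun t : ℂ => Kker a σ n m c (ξ + t • v) ξ')
      (∑ k : Fin (n+2), c k * A ^ ((a * k - n - 1 : ℝ) : ℂ) * ((σ + m + k : ℝ) : ℂ) * q *
        B ^ (-(((σ + m + k : ℝ) : ℂ)+1))) 0 := by
    rw [hfun]
    exact HasDerivAt.fun_sum fun k _ => hasDerivAt_term hB0 hBslit
  have hDeq := hcomp.unique hexp
  rw [hDeq]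
  -- the estimate
  have hGsq : ‖Gker a σ n m ξ ξ'‖ ^ 2 =
      ‖A‖ ^ ((a-1)*((n:ℝ)+2)) / ‖B‖ ^ (σ + (m:ℝ) + (n:ℝ) + 2) := by
    have hsq : ∀ (x : ℝ), 0 < x → ∀ p : ℝ, (x ^ p)^2 = x ^ (p+p) := by
      intro x hx p
      rw [sq, ← Real.rpow_add hx]
    simp only [Gker]
    rw [← hu_def, ← hA_def, ← hg_def, ← hB_def, norm_div, norm_cpow_real hA0,
      norm_cpow_real hB0, div_pow, hsq _ hApos, hsq _ hBpos]
    congr 1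
    · congr 1; ring
    · congr 1; ring
  rw [hGsq]
  have hq1 : ‖q‖ ≤ 1 := by
    have h1 : ‖ξ'.2 j‖^2 ≤ ∑ i, ‖ξ'.2 i‖ ^ 2 :=
      Finset.single_le_sum (f := fun i => ‖ξ'.2 i‖^2) (fun i _ => by positivity)
        (Finset.mem_univ j)
    have h2 : (1 - ∑ i, ‖ξ'.1 i‖ ^ 2 : ℝ) ^ a ≤ 1 :=
      Real.rpow_le_one (by linarith) (by linarith) ha.le
    have h3 : ‖q‖ = ‖ξ'.2 j‖ := by rw [hq_def]; simp
    nlinarith [norm_nonneg (ξ'.2 j), norm_nonneg q]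
  have hm0 : (0:ℝ) ≤ (m:ℝ) := Nat.cast_nonneg m
  calc ‖∑ k : Fin (n+2), c k * A ^ ((a * k - n - 1 : ℝ) : ℂ) * ((σ + m + k : ℝ) : ℂ) * q *
        B ^ (-(((σ + m + k : ℝ) : ℂ)+1))‖
      ≤ ∑ k : Fin (n+2), ‖c k * A ^ ((a * k - n - 1 : ℝ) : ℂ) * ((σ + m + k : ℝ) : ℂ) * q *
        B ^ (-(((σ + m + k : ℝ) : ℂ)+1))‖ := norm_sum_le _ _
    _ ≤ ∑ k : Fin (n+2), ‖c k‖ * (σ + m + (k:ℕ) + 1) *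
          ((2:ℝ)^((n:ℝ)+2) * (‖A‖ ^ ((a-1)*((n:ℝ)+2)) / ‖B‖ ^ (σ + (m:ℝ) + (n:ℝ) + 2))) := by
        refine Finset.sum_le_sum fun k _ => ?_
        have hknn : (0:ℝ) ≤ (k:ℕ) := Nat.cast_nonneg _
        have hm1 : (1:ℝ) ≤ (m:ℝ) := by exact_mod_cast hm
        have hsk : (0:ℝ) < σ + m + (k:ℕ) := by linarith
        have ecast : (-(((σ + m + k : ℝ) : ℂ)+1)) = (((-(σ + (m:ℝ) + ((k:ℕ):ℝ) + 1)) : ℝ) : ℂ) := by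
          push_cast
          ring
        have hterm : ‖c k * A ^ ((a * k - n - 1 : ℝ) : ℂ) * ((σ + m + k : ℝ) : ℂ) * q *
            B ^ (-(((σ + m + k : ℝ) : ℂ)+1))‖ =
            (‖c k‖ * (σ + m + (k:ℕ))) *
              (‖q‖ * (‖A‖ ^ (a * ((k:ℕ):ℝ) - (n:ℝ) - 1) *
                ‖B‖ ^ (-(σ + (m:ℝ) + ((k:ℕ):ℝ) + 1)))) := by
          rw [norm_mul, norm_mul, norm_mul, norm_mul, ecast,
            norm_cpow_real hA0, norm_cpow_real hB0]
          have : ‖((σ + m + k : ℝ) : ℂ)‖ = σ + m + (k:ℕ) := by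
            rw [Complex.norm_real]
            exact abs_of_pos hsk
          rw [this]
          push_cast
          ring
        rw [hterm]
        have hcore := core_ineq ha ha1 hApos hAub hBpos hBub n (k:ℕ)
          (by omega) (σ + (m:ℝ))
        have hcore' : ‖A‖ ^ (a * ((k:ℕ):ℝ) - (n:ℝ) - 1) *
            ‖B‖ ^ (-(σ + (m:ℝ) + ((k:ℕ):ℝ) + 1)) ≤
            (2:ℝ)^((n:ℝ)+2) * (‖A‖ ^ ((a-1)*((n:ℝ)+2)) / ‖B‖ ^ (σ + (m:ℝ) + (n:ℝ) + 2)) := by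
          have e1 : -(σ + (m:ℝ) + ((k:ℕ):ℝ) + 1) = -((σ + (m:ℝ)) + ((k:ℕ):ℝ) + 1) := by ring
          have e2 : σ + (m:ℝ) + (n:ℝ) + 2 = (σ + (m:ℝ)) + (n:ℝ) + 2 := by ring
          rw [e1, e2]
          exact hcore
        have hstep1 : ‖q‖ * (‖A‖ ^ (a * ((k:ℕ):ℝ) - (n:ℝ) - 1) *
            ‖B‖ ^ (-(σ + (m:ℝ) + ((k:ℕ):ℝ) + 1))) ≤
            (2:ℝ)^((n:ℝ)+2) * (‖A‖ ^ ((a-1)*((n:ℝ)+2)) / ‖B‖ ^ (σ + (m:ℝ) + (n:ℝ) + 2)) := by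
          have h0 : (0:ℝ) ≤ ‖A‖ ^ (a * ((k:ℕ):ℝ) - (n:ℝ) - 1) *
              ‖B‖ ^ (-(σ + (m:ℝ) + ((k:ℕ):ℝ) + 1)) := by positivity
          calc ‖q‖ * (‖A‖ ^ (a * ((k:ℕ):ℝ) - (n:ℝ) - 1) *
              ‖B‖ ^ (-(σ + (m:ℝ) + ((k:ℕ):ℝ) + 1)))
              ≤ 1 * (‖A‖ ^ (a * ((k:ℕ):ℝ) - (n:ℝ) - 1) *
                ‖B‖ ^ (-(σ + (m:ℝ) + ((k:ℕ):ℝ) + 1))) :=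
                mul_le_mul_of_nonneg_right hq1 h0
            _ = _ := one_mul _
            _ ≤ _ := hcore'
        refine mul_le_mul ?_ hstep1 (by positivity) ?_
        · exact mul_le_mul_of_nonneg_left (by linarith) (norm_nonneg _)
        · exact mul_nonneg (norm_nonneg _) (by linarith)
    _ = ((2:ℝ)^((n:ℝ)+2) * ∑ k : Fin (n+2), ‖c k‖ * (σ + m + (k:ℕ) + 1)) *
          (‖A‖ ^ ((a-1)*((n:ℝ)+2)) / ‖B‖ ^ (σ + (m:ℝ) + (n:ℝ) + 2)) := by
        rw [← Finset.sum_mul]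
        ring
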